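/- arXiv:2310.12119 — 5 statements merged into one kernel-verified Lean document; each statement's English description precedes it below -/
import Mathlib

section
/- For any real-valued random variable Z with a density bounded above by M (i.e., its law is absolutely continuous with density f_Z satisfying f_Z ≤ M almost everywhere, M > 0), the variance of Z satisfies Var(Z) ≥ 1/(12 M²). -/
open MeasureTheory ProbabilityTheory

lemma aux_tent_integral (m c : ℝ) (hc : 0 ≤ c) :
    ∫ x, (Set.Icc (m - c) (m + c)).indicator (fun x => c ^ 2 - (x - m) ^ 2) x ∂(volume : Measure ℝ)
      = 4 * c ^ 3 / 3 := by
  rw [integral_indicator measurableSet_Icc, integral_Icc_eq_integral_Ioc,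
    ← intervalIntegral.integral_of_le (by linarith : m - c ≤ m + c)]
  have hderiv : ∀ x ∈ Set.uIcc (m - c) (m + c),
      HasDerivAt (fun x => c ^ 2 * x - (x - m) ^ 3 / 3) (c ^ 2 - (x - m) ^ 2) x := by
    intro x _
    have h1 : HasDerivAt (fun x : ℝ => x - m) 1 x := (hasDerivAt_id x).sub_const m
    have h2 := ((h1.pow 3).div_const 3)
    have h3 := ((hasDerivAt_id x).const_mul (c ^ 2)).sub h2
    exact h3.congr_deriv (by norm_num)
  rw [intervalIntegral.integral_eq_sub_of_hasDerivAt hderiv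
    (((continuous_const.sub ((continuous_id.sub continuous_const).pow 2))).intervalIntegrable _ _)]
  ring


/-- If a real random variable `Z` has a Lebesgue density bounded by `M > 0`,
then `Var(Z) ≥ 1/(12 M²)`. -/
theorem variance_ge_of_density_le
    {Ω : Type*} [MeasurableSpace Ω] (μ : Measure Ω) [IsProbabilityMeasure μ]
    (Z : Ω → ℝ) (hZ : Measurable Z) (hL2 : MemLp Z 2 μ)
    (f : ℝ → ENNReal) (M : ℝ) (hM : 0 < M)
    (hdens : Measure.map Z μ = (volume : Measure ℝ).withDensity f)
    (hbound : ∀ᵐ x ∂(volume : Measure ℝ), f x ≤ ENNReal.ofReal M) :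
    1 / (12 * M ^ 2) ≤ variance Z μ := by
  set m := μ[Z] with hm
  set c : ℝ := 1 / (2 * M) with hc
  have hc0 : 0 < c := by positivity
  set g : ℝ → ℝ := (Set.Icc (m - c) (m + c)).indicator (fun x => c ^ 2 - (x - m) ^ 2) with hg
  have hgmeas : Measurable g :=
    (measurable_const.sub ((measurable_id.sub measurable_const).pow_const 2)).indicator
      measurableSet_Icc
  have hg_nonneg : ∀ x, 0 ≤ g x := by
    intro x
    rw [hg]
    by_cases hx : x ∈ Set.Icc (m - c) (m + c)
    · rw [Set.indicator_of_mem hx]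
      obtain ⟨h1, h2⟩ := hx
      nlinarith
    · rw [Set.indicator_of_notMem hx]
  have hg_le : ∀ x, g x ≤ c ^ 2 := by
    intro x
    rw [hg]
    by_cases hx : x ∈ Set.Icc (m - c) (m + c)
    · rw [Set.indicator_of_mem hx]; nlinarith [sq_nonneg (x - m)]
    · rw [Set.indicator_of_notMem hx]; positivity
  have key : ∀ x, c ^ 2 - g x ≤ (x - m) ^ 2 := by
    intro x
    rw [hg]
    by_cases hx : x ∈ Set.Icc (m - c) (m + c)
    · rw [Set.indicator_of_mem hx]; ring_nf; nlinarith [sq_nonneg (x-m)]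
    · rw [Set.indicator_of_notMem hx]
      rw [Set.mem_Icc, not_and_or, not_le, not_le] at hx
      rcases hx with hx | hx <;> nlinarith
  -- measure domination
  have hν : Measure.map Z μ ≤ ENNReal.ofReal M • (volume : Measure ℝ) := by
    rw [hdens]
    refine Measure.le_iff.mpr fun s hs => ?_
    rw [withDensity_apply _ hs, Measure.smul_apply, smul_eq_mul]
    calc ∫⁻ x in s, f x ∂volume ≤ ∫⁻ _ in s, ENNReal.ofReal M ∂volume :=
          lintegral_mono_ae (ae_restrict_of_ae hbound)
      _ = ENNReal.ofReal M * volume s := by rw [setLIntegral_const]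
  -- integrability facts
  have hgZint : Integrable (fun ω => g (Z ω)) μ := by
    refine Integrable.mono' (integrable_const (c ^ 2)) ((hgmeas.comp hZ).aestronglyMeasurable) ?_
    exact Filter.Eventually.of_forall fun ω => by
      rw [Real.norm_eq_abs, abs_of_nonneg (hg_nonneg _)]; exact hg_le _
  have hgvol : Integrable g (volume : Measure ℝ) := by
    rw [hg]
    exact (((continuous_const.sub ((continuous_id.sub continuous_const).pow 2)).integrableOn_Icc)).integrable_indicator measurableSet_Icc
  have hZm2 : Integrable (fun ω => (Z ω - m) ^ 2) μ := (hL2.sub (memLp_const m)).integrable_sq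
  -- step 1 : lower bound variance
  have h1 : c ^ 2 - ∫ ω, g (Z ω) ∂μ ≤ variance Z μ := by
    rw [variance_eq_integral hZ.aemeasurable]
    have : ∫ ω, (c ^ 2 - g (Z ω)) ∂μ ≤ ∫ ω, (Z ω - m) ^ 2 ∂μ := by
      refine integral_mono_of_nonneg (Filter.Eventually.of_forall fun ω =>
        sub_nonneg.mpr (hg_le (Z ω))) hZm2 (Filter.Eventually.of_forall fun ω => key (Z ω))
    rwa [integral_sub (integrable_const _) hgZint, integral_const, probReal_univ,
      one_smul] at this
  -- step 2 : bound ∫ g ∘ Z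
  have h2 : ∫ ω, g (Z ω) ∂μ ≤ M * (4 * c ^ 3 / 3) := by
    have hmap : ∫ ω, g (Z ω) ∂μ = ∫ x, g x ∂(Measure.map Z μ) :=
      (integral_map hZ.aemeasurable hgmeas.aestronglyMeasurable).symm
    have hmono : ∫ x, g x ∂(Measure.map Z μ) ≤ ∫ x, g x ∂(ENNReal.ofReal M • (volume : Measure ℝ)) :=
      integral_mono_measure hν (Filter.Eventually.of_forall hg_nonneg)
        (hgvol.smul_measure ENNReal.ofReal_ne_top)
    have hsmul : ∫ x, g x ∂(ENNReal.ofReal M • (volume : Measure ℝ)) = M * ∫ x, g x ∂volume := by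
      rw [integral_smul_measure, ENNReal.toReal_ofReal hM.le, smul_eq_mul]
    have hval : ∫ x, g x ∂(volume : Measure ℝ) = 4 * c ^ 3 / 3 := by
      rw [hg]; exact aux_tent_integral m c hc0.le
    rw [hmap]
    calc ∫ x, g x ∂(Measure.map Z μ) ≤ _ := hmono
      _ = M * ∫ x, g x ∂volume := hsmul
      _ = M * (4 * c ^ 3 / 3) := by rw [hval]
  have hfinal : 1 / (12 * M ^ 2) = c ^ 2 - M * (4 * c ^ 3 / 3) := by
    rw [hc]; field_simp; ring
  rw [hfinal]
  linarith
end

section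
/- For every real-valued random variable Z (with finite variance) and every ε > 0, the Lévy concentration function satisfies Q(Z, ε) := sup_{t ∈ ℝ} P(t ≤ Z ≤ t + ε) ≥ (ε/√12) / √(Var(Z) + ε²/12). -/
open MeasureTheory ProbabilityTheory Set

lemma concentration_key (ν : Measure ℝ) [IsProbabilityMeasure ν] (hν : MemLp id 2 ν)
    (ε Q : ℝ) (hε : 0 < ε)
    (hQ : ∀ y : ℝ, (ν (Icc (y - ε) y)).toReal ≤ Q) :
    (ε / Real.sqrt 12) / Real.sqrt (variance id ν + ε ^ 2 / 12) ≤ Q := by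
  set m : ℝ := ∫ x, x ∂ν with hm
  set a : ℝ := m + ε / 2 with ha
  set S : Set (ℝ × ℝ) := {p : ℝ × ℝ | p.1 - ε ≤ p.2 ∧ p.2 < p.1} with hS
  have hSm : MeasurableSet S :=
    (measurableSet_le (measurable_fst.sub measurable_const) measurable_snd).inter
      (measurableSet_lt measurable_snd measurable_fst)
  have h1 : ∀ y, ν (Ico (y - ε) y) = ∫⁻ x, S.indicator 1 (y, x) ∂ν := by
    intro y
    have h : ∀ x : ℝ, S.indicator 1 (y, x) = (Ico (y - ε) y).indicator (1 : ℝ → ENNReal) x := by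
      intro x
      by_cases hx : x ∈ Ico (y - ε) y
      · rw [Set.indicator_of_mem hx, Set.indicator_of_mem]
        · rfl
        · exact ⟨hx.1, hx.2⟩
      · rw [Set.indicator_of_notMem hx, Set.indicator_of_notMem]
        intro h; exact hx ⟨h.1, h.2⟩
    simp_rw [h]
    rw [lintegral_indicator_one measurableSet_Ico]
  -- Step 1 : total mass of the smoothed density
  have step1 : ∫⁻ y, ν (Ico (y - ε) y) = ENNReal.ofReal ε := by
    simp_rw [h1]
    rw [lintegral_lintegral_swap]
    · have h2 : ∀ x : ℝ, ∫⁻ y, S.indicator 1 (y, x) = ENNReal.ofReal ε := by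
        intro x
        have h : ∀ y : ℝ, S.indicator 1 (y, x) = (Ioc x (x + ε)).indicator (1 : ℝ → ENNReal) y := by
          intro y
          by_cases hy : y ∈ Ioc x (x + ε)
          · rw [Set.indicator_of_mem hy, Set.indicator_of_mem]
            · rfl
            · exact ⟨by linarith [hy.2], hy.1⟩
          · rw [Set.indicator_of_notMem hy, Set.indicator_of_notMem]
            intro h; exact hy ⟨h.2, by linarith [h.1]⟩
        simp_rw [h]
        rw [lintegral_indicator_one measurableSet_Ioc, Real.volume_Ioc]
        congr 1; ring
      simp_rw [h2]
      rw [lintegral_const, measure_univ, mul_one]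
    · exact (measurable_const.indicator hSm).aemeasurable
  -- positivity of Q
  have hQpos : 0 < Q := by
    by_contra hc
    push_neg at hc
    have hzero : ∀ y : ℝ, ν (Ico (y - ε) y) = 0 := by
      intro y
      have h0 : (ν (Icc (y - ε) y)).toReal = 0 :=
        le_antisymm ((hQ y).trans hc) ENNReal.toReal_nonneg
      have h1' : ν (Icc (y - ε) y) = 0 := by
        have := measure_ne_top ν (Icc (y - ε) y)
        exact (ENNReal.toReal_eq_zero_iff _).1 h0 |>.resolve_right this
      exact le_antisymm (le_trans (measure_mono Ico_subset_Icc_self) h1'.le) (zero_le)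
    have : (ENNReal.ofReal ε) = 0 := by
      rw [← step1]
      simp_rw [hzero]
      simp
    simp [ENNReal.ofReal_eq_zero] at this
    linarith
  set δ : ℝ := ε / (2 * Q) with hδ
  have hδpos : 0 < δ := by positivity
  have hHle : ∀ y, ν (Ico (y - ε) y) ≤ ENNReal.ofReal Q := by
    intro y
    refine le_trans (measure_mono Ico_subset_Icc_self) ?_
    rw [ENNReal.le_ofReal_iff_toReal_le (measure_ne_top _ _) hQpos.le]
    exact hQ y
  -- Step 2 : second moment of the smoothed density
  have step2 : ∫⁻ y, ENNReal.ofReal ((y - a) ^ 2) * ν (Ico (y - ε) y)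
      = ENNReal.ofReal (ε * (variance id ν + ε ^ 2 / 12)) := by
    simp_rw [h1, lintegral_const_mul' _ _ ENNReal.ofReal_ne_top |>.symm]
    rw [lintegral_lintegral_swap]
    · have h2 : ∀ x : ℝ, (∫⁻ y, ENNReal.ofReal ((y - a) ^ 2) * S.indicator 1 (y, x))
          = ENNReal.ofReal (ε * (x - a) ^ 2 + ε ^ 2 * (x - a) + ε ^ 3 / 3) := by
        intro x
        have hind : ∀ y : ℝ, ENNReal.ofReal ((y - a) ^ 2) * S.indicator 1 (y, x)
            = (Ioc x (x + ε)).indicator (fun y => ENNReal.ofReal ((y - a) ^ 2)) y := by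
          intro y
          by_cases hy : y ∈ Ioc x (x + ε)
          · rw [Set.indicator_of_mem (show (y, x) ∈ S from ⟨by linarith [hy.2], hy.1⟩),
              Set.indicator_of_mem hy, Pi.one_apply, mul_one]
          · rw [Set.indicator_of_notMem hy, Set.indicator_of_notMem, mul_zero]
            intro h; exact hy ⟨h.2, by linarith [h.1]⟩
        simp_rw [hind]
        rw [lintegral_indicator measurableSet_Ioc,
          ← ofReal_integral_eq_lintegral_ofReal]
        · congr 1
          rw [← intervalIntegral.integral_of_le (by linarith : x ≤ x + ε),
            intervalIntegral.integral_comp_sub_right (fun y => y ^ 2) a,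
            integral_pow]
          ring
        · exact Continuous.integrableOn_Ioc ((continuous_id.sub continuous_const).pow 2)
        · exact Filter.Eventually.of_forall fun y => sq_nonneg _
      simp_rw [h2]
      have hid : Integrable (fun x : ℝ => x) ν := hν.integrable one_le_two
      have hsq : Integrable (fun x : ℝ => x ^ 2) ν := hν.integrable_sq
      have hsub : Integrable (fun x : ℝ => x - a) ν := hid.sub (integrable_const a)
      have hxa2 : Integrable (fun x : ℝ => (x - a) ^ 2) ν := by
        have h : (fun x : ℝ => (x - a) ^ 2) = fun x => x ^ 2 - 2 * a * x + a ^ 2 := by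
          funext x; ring
        rw [h]
        exact (hsq.sub (hid.const_mul (2 * a))).add (integrable_const _)
      have hφint : Integrable (fun x : ℝ => ε * (x - a) ^ 2 + ε ^ 2 * (x - a) + ε ^ 3 / 3) ν :=
        ((hxa2.const_mul ε).add (hsub.const_mul (ε ^ 2))).add (integrable_const _)
      rw [← ofReal_integral_eq_lintegral_ofReal hφint]
      · congr 1
        have hIsub : ∫ x, (x - a) ∂ν = m - a := by
          rw [integral_sub hid (integrable_const _), integral_const]
          simp [← hm]
        have hvar : (∫ x, x ^ 2 ∂ν) = variance id ν + m ^ 2 := by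
          rw [variance_eq_sub hν]
          have h : ∫ x, (id ^ 2 : ℝ → ℝ) x ∂ν = ∫ x, x ^ 2 ∂ν := by
            congr 1
          rw [h]
          simp [← hm]
        have hB : Integrable (fun x : ℝ => x ^ 2 - 2 * a * x) ν := hsq.sub (hid.const_mul (2 * a))
        have hC : Integrable (fun x : ℝ => 2 * a * x) ν := hid.const_mul (2 * a)
        have hxa2val : ∫ x, (x - a) ^ 2 ∂ν = variance id ν + (m - a) ^ 2 := by
          have h : (fun x : ℝ => (x - a) ^ 2) = fun x => x ^ 2 - 2 * a * x + a ^ 2 := by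
            funext x; ring
          rw [h, integral_add hB (integrable_const _),
            integral_sub hsq hC, integral_const_mul, integral_const,
            hvar]
          simp [← hm]
          ring
        have hD : Integrable (fun x : ℝ => ε * (x - a) ^ 2) ν := hxa2.const_mul ε
        have hE : Integrable (fun x : ℝ => ε ^ 2 * (x - a)) ν := hsub.const_mul (ε ^ 2)
        have hF : Integrable (fun x : ℝ => ε * (x - a) ^ 2 + ε ^ 2 * (x - a)) ν := hD.add hE
        rw [integral_add hF (integrable_const _),
          integral_add hD hE,
          integral_const_mul, integral_const_mul, hxa2val, hIsub, integral_const]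
        simp only [measure_univ, probReal_univ, ENNReal.toReal_one, smul_eq_mul, one_mul, one_smul]
        rw [ha]
        ring
      · exact Filter.Eventually.of_forall fun x => by
          simp only [Pi.zero_apply]
          nlinarith [sq_nonneg (x - a + ε / 2), sq_nonneg (x - a)]
    · apply AEMeasurable.mul
      · exact ((measurable_fst.sub measurable_const).pow_const 2).ennreal_ofReal.aemeasurable
      · exact (measurable_const.indicator hSm).aemeasurable
  -- the comparison function g
  set g : ℝ → ENNReal := fun y => (Icc (a - δ) (a + δ)).indicator
      (fun _ => ENNReal.ofReal Q) y with hg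
  have hgmeas : Measurable g := measurable_const.indicator measurableSet_Icc
  have gmass : ∫⁻ y, g y = ENNReal.ofReal ε := by
    rw [hg, lintegral_indicator_const measurableSet_Icc, Real.volume_Icc,
      ← ENNReal.ofReal_mul hQpos.le]
    congr 1
    rw [hδ]
    field_simp
    ring
  have gmom : ∫⁻ y, ENNReal.ofReal ((y - a) ^ 2) * g y
      = ENNReal.ofReal (ε ^ 3 / (12 * Q ^ 2)) := by
    have h : ∀ y : ℝ, ENNReal.ofReal ((y - a) ^ 2) * g y
        = (Icc (a - δ) (a + δ)).indicator (fun y => ENNReal.ofReal ((y - a) ^ 2 * Q)) y := by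
      intro y
      by_cases hy : y ∈ Icc (a - δ) (a + δ)
      · simp only [hg]
        rw [Set.indicator_of_mem hy, Set.indicator_of_mem hy,
          ENNReal.ofReal_mul (sq_nonneg _)]
      · simp only [hg]
        rw [Set.indicator_of_notMem hy, Set.indicator_of_notMem hy, mul_zero]
    simp_rw [h]
    rw [lintegral_indicator measurableSet_Icc, ← ofReal_integral_eq_lintegral_ofReal]
    · congr 1
      rw [MeasureTheory.integral_Icc_eq_integral_Ioc,
        ← intervalIntegral.integral_of_le (by linarith : a - δ ≤ a + δ)]
      have : ∀ y : ℝ, (y - a) ^ 2 * Q = Q * (y - a) ^ 2 := fun y => mul_comm _ _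
      simp_rw [this]
      rw [intervalIntegral.integral_const_mul,
        intervalIntegral.integral_comp_sub_right (fun y => y ^ 2) a,
        integral_pow]
      have h1 : a - δ - a = -δ := by ring
      have h2 : a + δ - a = δ := by ring
      rw [h1, h2, hδ]
      have hQne := hQpos.ne'
      simp only [Nat.reduceAdd, Nat.cast_ofNat]
      field_simp
      ring
    · exact Continuous.integrableOn_Icc
        (((continuous_id.sub continuous_const).pow 2).mul continuous_const)
    · exact Filter.Eventually.of_forall fun y => mul_nonneg (sq_nonneg _) hQpos.le
  -- pointwise comparison
  have ptwise : ∀ y, ENNReal.ofReal ((y - a) ^ 2) * g y + ENNReal.ofReal (δ ^ 2) * ν (Ico (y - ε) y)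
      ≤ ENNReal.ofReal ((y - a) ^ 2) * ν (Ico (y - ε) y) + ENNReal.ofReal (δ ^ 2) * g y := by
    intro y
    by_cases hy : y ∈ Icc (a - δ) (a + δ)
    · have hyd : (y - a) ^ 2 ≤ δ ^ 2 := by
        rcases hy with ⟨h1, h2⟩
        nlinarith
      have hc : ENNReal.ofReal ((y - a) ^ 2) ≤ ENNReal.ofReal (δ ^ 2) :=
        ENNReal.ofReal_le_ofReal hyd
      have hgy : g y = ENNReal.ofReal Q := by rw [hg]; exact Set.indicator_of_mem hy _
      rw [hgy]
      have hR : ENNReal.ofReal Q = ν (Ico (y - ε) y) + (ENNReal.ofReal Q - ν (Ico (y - ε) y)) :=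
        (add_tsub_cancel_of_le (hHle y)).symm
      rw [hR, mul_add, mul_add]
      calc ENNReal.ofReal ((y - a) ^ 2) * ν (Ico (y - ε) y)
            + ENNReal.ofReal ((y - a) ^ 2) * (ENNReal.ofReal Q - ν (Ico (y - ε) y))
            + ENNReal.ofReal (δ ^ 2) * ν (Ico (y - ε) y)
          ≤ ENNReal.ofReal ((y - a) ^ 2) * ν (Ico (y - ε) y)
            + ENNReal.ofReal (δ ^ 2) * (ENNReal.ofReal Q - ν (Ico (y - ε) y))
            + ENNReal.ofReal (δ ^ 2) * ν (Ico (y - ε) y) := by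
            gcongr
          _ = ENNReal.ofReal ((y - a) ^ 2) * ν (Ico (y - ε) y)
            + (ENNReal.ofReal (δ ^ 2) * ν (Ico (y - ε) y)
              + ENNReal.ofReal (δ ^ 2) * (ENNReal.ofReal Q - ν (Ico (y - ε) y))) := by
            ring
    · have hgy : g y = 0 := by rw [hg]; exact Set.indicator_of_notMem hy _
      rw [hgy, mul_zero, mul_zero, zero_add, add_zero]
      have hyd : δ ^ 2 ≤ (y - a) ^ 2 := by
        simp only [mem_Icc, not_and_or, not_le] at hy
        rcases hy with h | h <;> nlinarith
      exact mul_le_mul_left (ENNReal.ofReal_le_ofReal hyd) _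
  -- integrate the pointwise comparison
  have main : ENNReal.ofReal (ε ^ 3 / (12 * Q ^ 2))
      ≤ ENNReal.ofReal (ε * (variance id ν + ε ^ 2 / 12)) := by
    have hint : ∫⁻ y, (ENNReal.ofReal ((y - a) ^ 2) * g y
          + ENNReal.ofReal (δ ^ 2) * ν (Ico (y - ε) y))
        ≤ ∫⁻ y, (ENNReal.ofReal ((y - a) ^ 2) * ν (Ico (y - ε) y)
          + ENNReal.ofReal (δ ^ 2) * g y) := lintegral_mono ptwise
    have hmgc : Measurable (fun y : ℝ => ENNReal.ofReal ((y - a) ^ 2) * g y) :=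
      ((measurable_id.sub_const a).pow_const 2).ennreal_ofReal.mul hgmeas
    have hmgd : Measurable (fun y : ℝ => ENNReal.ofReal (δ ^ 2) * g y) :=
      measurable_const.mul hgmeas
    rw [lintegral_add_left hmgc,
      lintegral_add_right _ hmgd,
      lintegral_const_mul' _ _ ENNReal.ofReal_ne_top,
      lintegral_const_mul' _ _ ENNReal.ofReal_ne_top,
      gmom, gmass, step1, step2] at hint
    exact (ENNReal.add_le_add_iff_right
      (ENNReal.mul_ne_top ENNReal.ofReal_ne_top ENNReal.ofReal_ne_top)).1 hint
  have hre : ε ^ 3 / (12 * Q ^ 2) ≤ ε * (variance id ν + ε ^ 2 / 12) := by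
    have hnn : 0 ≤ ε * (variance id ν + ε ^ 2 / 12) := by
      have := variance_nonneg (id : ℝ → ℝ) ν
      positivity
    exact (ENNReal.ofReal_le_ofReal_iff hnn).1 main
  -- final algebra
  set W : ℝ := variance id ν + ε ^ 2 / 12 with hW
  have hWpos : 0 < W := by
    have := variance_nonneg (id : ℝ → ℝ) ν
    positivity
  have h2 : ε ^ 2 / 12 ≤ Q ^ 2 * W := by
    have hQ2 : (0:ℝ) < Q ^ 2 := by positivity
    have h1 : ε ^ 3 / 12 ≤ ε * W * Q ^ 2 := by
      have := mul_le_mul_of_nonneg_right hre hQ2.le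
      calc ε ^ 3 / 12 = ε ^ 3 / (12 * Q ^ 2) * Q ^ 2 := by field_simp
        _ ≤ ε * W * Q ^ 2 := this
    nlinarith
  have hsW : 0 < Real.sqrt W := Real.sqrt_pos.2 hWpos
  rw [div_le_iff₀ hsW]
  have hl : ε / Real.sqrt 12 = Real.sqrt (ε ^ 2 / 12) := by
    rw [Real.sqrt_div (sq_nonneg ε), Real.sqrt_sq hε.le]
  have hr : Q * Real.sqrt W = Real.sqrt (Q ^ 2 * W) := by
    rw [Real.sqrt_mul (sq_nonneg Q), Real.sqrt_sq hQpos.le]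
  rw [hl, hr]
  exact Real.sqrt_le_sqrt h2

/-- Lower bound on the Lévy concentration function of any real random variable with
finite variance: `Q(Z, ε) ≥ (ε/√12)/√(Var(Z) + ε²/12)`. -/
theorem concentration_lower_bound
    {Ω : Type*} [MeasurableSpace Ω] (μ : Measure Ω) [IsProbabilityMeasure μ]
    (Z : Ω → ℝ) (hZ : Measurable Z) (hL2 : MemLp Z 2 μ)
    (ε : ℝ) (hε : 0 < ε) :
    (ε / Real.sqrt 12) / Real.sqrt (variance Z μ + ε ^ 2 / 12) ≤
      ⨆ t : ℝ, (μ {ω | t ≤ Z ω ∧ Z ω ≤ t + ε}).toReal := by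
  set ν : Measure ℝ := μ.map Z with hν
  haveI : IsProbabilityMeasure ν := Measure.isProbabilityMeasure_map hZ.aemeasurable
  have hνL2 : MemLp id 2 ν :=
    (memLp_map_measure_iff aestronglyMeasurable_id hZ.aemeasurable).2 hL2
  have hbdd : BddAbove (Set.range fun t : ℝ => (μ {ω | t ≤ Z ω ∧ Z ω ≤ t + ε}).toReal) := by
    refine ⟨1, ?_⟩
    rintro x ⟨t, rfl⟩
    exact ENNReal.toReal_le_of_le_ofReal zero_le_one (by simpa using prob_le_one)
  have hvar : variance id ν = variance Z μ := by
    have hm2 : ∫ x, (id ^ 2 : ℝ → ℝ) x ∂ν = ∫ x, (Z ^ 2 : Ω → ℝ) x ∂μ := by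
      have e1 : ∫ x, (id ^ 2 : ℝ → ℝ) x ∂ν = ∫ x, x ^ 2 ∂ν := by congr 1
      rw [e1, hν, integral_map hZ.aemeasurable ((continuous_pow 2).aestronglyMeasurable)]
      congr 1
    have hm1 : ∫ x, id x ∂ν = ∫ x, Z x ∂μ := by
      rw [hν, integral_map hZ.aemeasurable aestronglyMeasurable_id]
      simp only [id_eq]
    rw [variance_eq_sub hνL2, variance_eq_sub hL2, hm2, hm1]
  have hQ : ∀ y : ℝ, (ν (Icc (y - ε) y)).toReal
      ≤ ⨆ t : ℝ, (μ {ω | t ≤ Z ω ∧ Z ω ≤ t + ε}).toReal := by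
    intro y
    have hmap : ν (Icc (y - ε) y) = μ {ω | y - ε ≤ Z ω ∧ Z ω ≤ (y - ε) + ε} := by
      rw [hν, Measure.map_apply hZ measurableSet_Icc]
      congr 1
      ext ω
      simp [Set.mem_Icc, sub_add_cancel]
    rw [hmap]
    exact le_ciSup hbdd (y - ε)
  have := concentration_key ν hνL2 ε _ hε hQ
  rwa [hvar] at this
end

section
/- For all a ≥ 0, a ≤ erf(a)·√(1 + a²) ≤ √2 · a, where erf(a) = (2/√π) ∫₀^a e^{−t²} dt. -/
open MeasureTheory Real

/-- The Gauss error function `erf(a) = (2/√π) ∫₀^a e^{−t²} dt`. -/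
noncomputable def erf (a : ℝ) : ℝ := (2 / Real.sqrt π) * ∫ t in (0:ℝ)..a, Real.exp (-t ^ 2)

open Filter

noncomputable def sA (a : ℝ) : ℝ := Real.sqrt (1 + a ^ 2)

lemma one_add_sq_pos (a : ℝ) : (0:ℝ) < 1 + a ^ 2 := by positivity

lemma sA_pos (a : ℝ) : 0 < sA a := Real.sqrt_pos.2 (one_add_sq_pos a)

lemma sA_sq (a : ℝ) : sA a ^ 2 = 1 + a ^ 2 := Real.sq_sqrt (one_add_sq_pos a).le

lemma hasDerivAt_one_add_sq (a : ℝ) : HasDerivAt (fun x : ℝ => 1 + x ^ 2) (2 * a) a := by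
  simpa using ((hasDerivAt_pow 2 a).const_add 1)

lemma hasDerivAt_sA (a : ℝ) : HasDerivAt sA (a / sA a) a := by
  have h := (hasDerivAt_one_add_sq a).sqrt (one_add_sq_pos a).ne'
  convert h using 1
  unfold sA
  field_simp
  rw [sA]; ring

lemma hasDerivAt_g (a : ℝ) :
    HasDerivAt (fun x : ℝ => x / sA x) (((1 + a ^ 2) * sA a)⁻¹) a := by
  have h := (hasDerivAt_id a).fun_div (hasDerivAt_sA a) (sA_pos a).ne'
  refine h.congr_deriv ?_; symm
  have hs := sA_pos a
  have hs2 := sA_sq a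
  have hm : sA a * sA a = 1 + a ^ 2 := Real.mul_self_sqrt (one_add_sq_pos a).le
  field_simp
  rw [sA_sq, id]
  ring

lemma hasDerivAt_gauss (a : ℝ) :
    HasDerivAt (fun x : ℝ => Real.exp (-x ^ 2)) (-2 * a * Real.exp (-a ^ 2)) a := by
  have h1 : HasDerivAt (fun x : ℝ => -x ^ 2) (-(2 * a)) a := by
    simpa using (hasDerivAt_pow 2 a).fun_neg
  have h := h1.exp
  convert h using 1
  ring


lemma gauss_continuous : Continuous fun t : ℝ => Real.exp (-t ^ 2) := by
  exact (continuous_pow 2).neg.rexp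

lemma hasDerivAt_I (a : ℝ) :
    HasDerivAt (fun u : ℝ => ∫ t in (0:ℝ)..u, Real.exp (-t ^ 2)) (Real.exp (-a ^ 2)) a := by
  exact intervalIntegral.integral_hasDerivAt_right
    (gauss_continuous.intervalIntegrable 0 a)
    gauss_continuous.aestronglyMeasurable.stronglyMeasurableAtFilter
    gauss_continuous.continuousAt

noncomputable def psi (a : ℝ) : ℝ := Real.exp (-a ^ 2) * ((1 + a ^ 2) * sA a)

lemma hasDerivAt_u (a : ℝ) :
    HasDerivAt (fun x : ℝ => (1 + x ^ 2) * sA x) (3 * a * sA a) a := by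
  have h := (hasDerivAt_one_add_sq a).fun_mul (hasDerivAt_sA a)
  refine h.congr_deriv ?_; symm
  have hm : sA a * sA a = 1 + a ^ 2 := Real.mul_self_sqrt (one_add_sq_pos a).le
  have hs := (sA_pos a).ne'
  field_simp
  linear_combination a * hm

lemma hasDerivAt_psi (a : ℝ) :
    HasDerivAt psi (a * Real.exp (-a ^ 2) * sA a * (1 - 2 * a ^ 2)) a := by
  have h := (hasDerivAt_gauss a).fun_mul (hasDerivAt_u a)
  refine h.congr_deriv ?_; symm
  ring

noncomputable def cL : ℝ := Real.sqrt π / 2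

noncomputable def phi (a : ℝ) : ℝ :=
  (∫ t in (0:ℝ)..a, Real.exp (-t ^ 2)) - cL * (a / sA a)

lemma hasDerivAt_phi (a : ℝ) :
    HasDerivAt phi (Real.exp (-a ^ 2) - cL * ((1 + a ^ 2) * sA a)⁻¹) a :=
  (hasDerivAt_I a).sub ((hasDerivAt_g a).const_mul cL)

lemma key_poly {x : ℝ} (hx : 0 ≤ x) : (1 + x) ^ 3 ≤ π / 2 * Real.exp (2 * x) := by
  have h1 : 1 + 2 * x + 2 * x ^ 2 + 4 / 3 * x ^ 3 ≤ Real.exp (2 * x) := by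
    have := Real.sum_le_exp_of_nonneg (by positivity : (0:ℝ) ≤ 2 * x) 4
    norm_num [Finset.sum_range_succ, Nat.factorial] at this
    nlinarith [this]
  have hpi : (3:ℝ) ≤ π := Real.pi_gt_three.le
  nlinarith [Real.exp_pos (2 * x), pow_nonneg hx 3, sq_nonneg x]

lemma key_upper (t : ℝ) :
    Real.exp (-t ^ 2) * ((1 + t ^ 2) * sA t) ≤ Real.sqrt (π / 2) := by
  set x := t ^ 2 with hxdef
  have hx : 0 ≤ x := sq_nonneg t
  have hnn : 0 ≤ Real.exp (-x) * ((1 + x) * sA t) :=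
    mul_nonneg (Real.exp_pos _).le (mul_nonneg (by positivity) (sA_pos t).le)
  rw [Real.le_sqrt hnn (by positivity)]
  have hss : sA t ^ 2 = 1 + x := sA_sq t
  have hsq : (Real.exp (-x) * ((1 + x) * sA t)) ^ 2
      = Real.exp (-x) ^ 2 * ((1 + x) ^ 2 * (1 + x)) := by
    rw [mul_pow, mul_pow, hss]; try ring
  rw [hsq, sq, ← Real.exp_add, show -x + -x = -(2 * x) by ring, Real.exp_neg,
    inv_mul_le_iff₀ (Real.exp_pos _)]
  nlinarith [key_poly hx]

lemma psi_diff : Differentiable ℝ psi := fun x => (hasDerivAt_psi x).differentiableAt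

lemma psi_deriv (a : ℝ) :
    deriv psi a = a * Real.exp (-a ^ 2) * sA a * (1 - 2 * a ^ 2) :=
  (hasDerivAt_psi a).deriv

lemma psi_zero : psi 0 = 1 := by
  simp [psi, sA]

noncomputable def rr : ℝ := Real.sqrt (1 / 2)

lemma rr_pos : 0 < rr := Real.sqrt_pos.2 (by norm_num)

lemma psi_mono : MonotoneOn psi (Set.Icc 0 rr) := by
  apply monotoneOn_of_deriv_nonneg (convex_Icc _ _)
    psi_diff.continuous.continuousOn psi_diff.differentiableOn
  intro x hx
  rw [interior_Icc] at hx
  rw [psi_deriv]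
  have hx2 : x ^ 2 < 1 / 2 := by
    have := (Real.lt_sqrt hx.1.le).1 hx.2
    simpa [rr] using (Real.lt_sqrt hx.1.le).1 hx.2
  have h1 : (0:ℝ) ≤ 1 - 2 * x ^ 2 := by linarith
  exact mul_nonneg (mul_nonneg (mul_nonneg hx.1.le (Real.exp_pos _).le) (sA_pos x).le) h1

lemma psi_anti : AntitoneOn psi (Set.Ici rr) := by
  apply antitoneOn_of_deriv_nonpos (convex_Ici _)
    psi_diff.continuous.continuousOn psi_diff.differentiableOn
  intro x hx
  rw [interior_Ici] at hx
  rw [psi_deriv]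
  have hxpos : 0 < x := lt_trans rr_pos hx
  have hx2 : 1 / 2 < x ^ 2 := by
    have := (Real.sqrt_lt' hxpos).1 hx
    simpa [rr] using this
  have h1 : 1 - 2 * x ^ 2 ≤ 0 := by linarith
  exact mul_nonpos_of_nonneg_of_nonpos
    (mul_nonneg (mul_nonneg hxpos.le (Real.exp_pos _).le) (sA_pos x).le) h1

lemma cL_pos : 0 < cL := by
  have := Real.sqrt_pos.2 Real.pi_pos
  unfold cL; linarith

lemma cL_lt_one : cL < 1 := by
  have h : Real.sqrt π < 2 := by
    rw [show (2:ℝ) = Real.sqrt 4 by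
      rw [show (4:ℝ) = 2 ^ 2 by norm_num, Real.sqrt_sq]; norm_num]
    exact Real.sqrt_lt_sqrt Real.pi_pos.le (by linarith [Real.pi_lt_d2])
  unfold cL; linarith

lemma tendsto_I :
    Tendsto (fun b : ℝ => ∫ t in (0:ℝ)..b, Real.exp (-t ^ 2)) atTop (nhds cL) := by
  have hint : IntegrableOn (fun t : ℝ => Real.exp (-t ^ 2)) (Set.Ioi 0) := by
    have := (integrable_exp_neg_mul_sq (by norm_num : (0:ℝ) < 1)).integrableOn
      (s := Set.Ioi (0:ℝ))
    simpa using this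
  have h := intervalIntegral_tendsto_integral_Ioi 0 hint tendsto_id
  have hval : ∫ t in Set.Ioi (0:ℝ), Real.exp (-t ^ 2) = cL := by
    have := integral_gaussian_Ioi 1
    simp only [neg_mul, one_mul, div_one] at this
    rw [show (fun t : ℝ => Real.exp (-t ^ 2)) = fun t : ℝ => Real.exp (-(t ^ 2)) by rfl]
    rw [this]
    rfl
  rwa [hval] at h

lemma tendsto_ratio : Tendsto (fun b : ℝ => b / sA b) atTop (nhds 1) := by
  have h0 : Tendsto (fun b : ℝ => 1 - (1 + b ^ 2)⁻¹) atTop (nhds 1) := by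
    have h1 : Tendsto (fun b : ℝ => 1 + b ^ 2) atTop atTop :=
      tendsto_atTop_add_const_left _ 1 (tendsto_pow_atTop two_ne_zero)
    have h2 := (tendsto_inv_atTop_zero).comp h1
    have h4 : Tendsto (fun b : ℝ => 1 - (1 + b ^ 2)⁻¹) atTop (nhds (1 - 0)) :=
      Tendsto.sub tendsto_const_nhds h2
    simpa using h4
  have h3 := (Real.continuous_sqrt.tendsto 1).comp h0
  rw [Real.sqrt_one] at h3
  apply h3.congr'
  filter_upwards [eventually_ge_atTop (0:ℝ)] with b hb
  have hpos := one_add_sq_pos b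
  have : 1 - (1 + b ^ 2)⁻¹ = b ^ 2 / (1 + b ^ 2) := by field_simp; ring
  simp only [Function.comp_apply, this]
  rw [Real.sqrt_div (sq_nonneg b), Real.sqrt_sq hb]
  rfl

lemma tendsto_phi : Tendsto phi atTop (nhds 0) := by
  have := tendsto_I.sub ((tendsto_ratio).const_mul cL)
  simp only [mul_one, sub_self] at this; exact this

lemma phi_nonneg {a : ℝ} (ha : 0 ≤ a) : 0 ≤ phi a := by
  have phidiff : Differentiable ℝ phi := fun x => (hasDerivAt_phi x).differentiableAt
  have hderiv_iff : ∀ x : ℝ, cL ≤ psi x → 0 ≤ deriv phi x := by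
    intro x hx
    rw [(hasDerivAt_phi x).deriv]
    have hden : 0 < (1 + x ^ 2) * sA x := mul_pos (one_add_sq_pos x) (sA_pos x)
    rw [sub_nonneg, ← div_eq_mul_inv, div_le_iff₀ hden]
    exact hx
  have hderiv_neg : ∀ x : ℝ, psi x ≤ cL → deriv phi x ≤ 0 := by
    intro x hx
    rw [(hasDerivAt_phi x).deriv]
    have hden : 0 < (1 + x ^ 2) * sA x := mul_pos (one_add_sq_pos x) (sA_pos x)
    rw [sub_nonpos, ← div_eq_mul_inv, le_div_iff₀ hden]
    exact hx
  by_cases hcase : cL ≤ psi a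
  · -- phi monotone on [0, a]
    have hmono : MonotoneOn phi (Set.Icc 0 a) := by
      apply monotoneOn_of_deriv_nonneg (convex_Icc _ _)
        phidiff.continuous.continuousOn phidiff.differentiableOn
      intro x hx
      rw [interior_Icc] at hx
      apply hderiv_iff
      by_cases hxr : x ≤ rr
      · have := psi_mono ⟨le_refl 0, rr_pos.le⟩ ⟨hx.1.le, hxr⟩ hx.1.le
        rw [psi_zero] at this
        linarith [cL_lt_one]
      · push_neg at hxr
        have har : rr ≤ a := le_trans hxr.le hx.2.le
        exact le_trans hcase (psi_anti (Set.mem_Ici.2 hxr.le) (Set.mem_Ici.2 har) hx.2.le)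
    have h0 : phi 0 = 0 := by simp [phi]
    have := hmono ⟨le_refl 0, ha⟩ ⟨ha, le_refl a⟩ ha
    linarith
  · push_neg at hcase
    have hra : rr < a := by
      by_contra hle
      push_neg at hle
      have := psi_mono ⟨le_refl 0, rr_pos.le⟩ ⟨ha, hle⟩ ha
      rw [psi_zero] at this
      linarith [cL_lt_one]
    have hanti : AntitoneOn phi (Set.Ici a) := by
      apply antitoneOn_of_deriv_nonpos (convex_Ici _)
        phidiff.continuous.continuousOn phidiff.differentiableOn
      intro x hx
      rw [interior_Ici] at hx
      apply hderiv_neg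
      exact le_trans (psi_anti (Set.mem_Ici.2 hra.le) (Set.mem_Ici.2 (hra.trans hx).le) hx.le) hcase.le
    apply le_of_tendsto tendsto_phi
    filter_upwards [eventually_ge_atTop a] with t ht
    exact hanti (Set.mem_Ici.2 (le_refl a)) (Set.mem_Ici.2 ht) ht

lemma sA_continuous : Continuous sA :=
  Real.continuous_sqrt.comp (continuous_const.add (continuous_pow 2))

lemma rhs_continuous : Continuous (fun t : ℝ => Real.sqrt (π / 2) * ((1 + t ^ 2) * sA t)⁻¹) := by
  apply continuous_const.mul
  exact ((continuous_const.add (continuous_pow 2)).mul sA_continuous).inv₀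
    fun x => (mul_pos (one_add_sq_pos x) (sA_pos x)).ne'

lemma upper_I {a : ℝ} (ha : 0 ≤ a) :
    (∫ t in (0:ℝ)..a, Real.exp (-t ^ 2)) ≤ Real.sqrt (π / 2) * (a / sA a) := by
  have heval : (∫ t in (0:ℝ)..a, Real.sqrt (π / 2) * ((1 + t ^ 2) * sA t)⁻¹)
      = Real.sqrt (π / 2) * (a / sA a) - Real.sqrt (π / 2) * (0 / sA 0) := by
    apply intervalIntegral.integral_eq_sub_of_hasDerivAt
    · exact fun x _ => (hasDerivAt_g x).const_mul _
    · exact rhs_continuous.intervalIntegrable _ _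
  have hmono : (∫ t in (0:ℝ)..a, Real.exp (-t ^ 2))
      ≤ ∫ t in (0:ℝ)..a, Real.sqrt (π / 2) * ((1 + t ^ 2) * sA t)⁻¹ := by
    apply intervalIntegral.integral_mono_on ha
      (gauss_continuous.intervalIntegrable _ _) (rhs_continuous.intervalIntegrable _ _)
    intro x _
    have hden : 0 < (1 + x ^ 2) * sA x := mul_pos (one_add_sq_pos x) (sA_pos x)
    rw [← div_eq_mul_inv, le_div_iff₀ hden]
    exact key_upper x
  rw [heval] at hmono
  simpa using hmono



/-- For all `a ≥ 0`, `a ≤ erf(a)·√(1 + a²) ≤ √2 · a`. -/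
theorem erf_sqrt_bounds (a : ℝ) (ha : 0 ≤ a) :
    a ≤ erf a * Real.sqrt (1 + a ^ 2) ∧ erf a * Real.sqrt (1 + a ^ 2) ≤ Real.sqrt 2 * a := by
  have hspi : 0 < Real.sqrt π := Real.sqrt_pos.2 Real.pi_pos
  have hs : 0 < sA a := sA_pos a
  have herf : erf a * Real.sqrt (1 + a ^ 2)
      = (2 / Real.sqrt π) * (∫ t in (0:ℝ)..a, Real.exp (-t ^ 2)) * sA a := rfl
  constructor
  · have hI : cL * (a / sA a) ≤ ∫ t in (0:ℝ)..a, Real.exp (-t ^ 2) := by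
      have := phi_nonneg ha
      unfold phi at this
      linarith
    have hkey : a = (2 / Real.sqrt π) * (cL * (a / sA a)) * sA a := by
      unfold cL
      field_simp
    rw [herf]
    conv_lhs => rw [hkey]
    apply mul_le_mul_of_nonneg_right _ hs.le
    exact mul_le_mul_of_nonneg_left hI (by positivity)
  · have hI := upper_I ha
    have h2 : Real.sqrt 2 * Real.sqrt 2 = 2 := Real.mul_self_sqrt (by norm_num)
    have h2pos : (0:ℝ) < Real.sqrt 2 := Real.sqrt_pos.2 (by norm_num)
    have hkey : (2 / Real.sqrt π) * (Real.sqrt (π / 2) * (a / sA a)) * sA a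
        = Real.sqrt 2 * a := by
      rw [Real.sqrt_div Real.pi_pos.le]
      field_simp
      linear_combination (-a) * h2
    rw [herf, ← hkey]
    apply mul_le_mul_of_nonneg_right _ hs.le
    exact mul_le_mul_of_nonneg_left hI (by positivity)
end

section
/- Let (Zₙ) be a sequence of real random variables converging weakly to Z, where the distribution function of Z is continuous. Then for every ε > 0, Q(Zₙ, ε) → Q(Z, ε) as n → ∞, where Q(X, ε) = sup_t P(t ≤ X ≤ t + ε). -/
open MeasureTheory ProbabilityTheory Filter
open Set


lemma polya_unif {F : ℕ → ℝ → ℝ} {G : ℝ → ℝ}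
    (hFmono : ∀ n, Monotone (F n)) (hF0 : ∀ n t, 0 ≤ F n t) (hF1 : ∀ n t, F n t ≤ 1)
    (hG0 : ∀ t, 0 ≤ G t) (hG1 : ∀ t, G t ≤ 1)
    (hGmono : Monotone G) (hGc : Continuous G)
    (hGbot : Tendsto G atBot (nhds 0)) (hGtop : Tendsto G atTop (nhds 1))
    (hpt : ∀ t, Tendsto (fun n => F n t) atTop (nhds (G t)))
    {η : ℝ} (hη : 0 < η) :
    ∀ᶠ n in atTop, ∀ t, |F n t - G t| ≤ 2 * η := by
  by_cases htriv : 1 ≤ 2 * η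
  · filter_upwards with n t
    rw [abs_sub_le_iff]
    constructor <;> nlinarith [hF0 n t, hF1 n t, hG0 t, hG1 t]
  push_neg at htriv
  obtain ⟨k, hk⟩ := exists_nat_gt (1 / η)
  have hkpos : (0 : ℝ) < k := lt_trans (by positivity) hk
  have hk1 : 1 / (k : ℝ) < η := by
    have h1k : (1:ℝ) < k * η := by
      calc (1:ℝ) = (1/η) * η := by field_simp
      _ < k * η := by exact mul_lt_mul_of_pos_right hk hη
    rw [div_lt_iff₀ hkpos]
    nlinarith
  have hk1' : ((k:ℝ))⁻¹ < η := by rwa [one_div] at hk1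
  have hk2 : 2 ≤ k := by
    by_contra h
    push_neg at h
    interval_cases k <;> simp_all <;> nlinarith
  -- surjectivity onto (0,1)
  have hsurj : ∀ c : ℝ, 0 < c → c < 1 → ∃ x, G x = c := by
    intro c hc0 hc1
    obtain ⟨a, ha⟩ := (hGbot.eventually_lt_const hc0).exists
    obtain ⟨b, hb⟩ := (hGtop.eventually_const_lt hc1).exists
    have := intermediate_value_univ a b hGc (Set.mem_Icc.mpr ⟨le_of_lt ha, le_of_lt hb⟩)
    exact this
  have hex : ∀ j ∈ Finset.Icc 1 (k-1), ∃ x, G x = (j : ℝ) / k := by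
    intro j hj
    simp only [Finset.mem_Icc] at hj
    have hjpos : (0:ℝ) < j := by exact_mod_cast hj.1
    refine hsurj _ (by positivity) ?_
    rw [div_lt_one hkpos]
    exact_mod_cast lt_of_le_of_lt (Nat.cast_le.mpr hj.2) (by exact_mod_cast Nat.sub_lt (by omega) one_pos)
  classical
  set s : ℕ → ℝ := fun j => if h : j ∈ Finset.Icc 1 (k-1) then (hex j h).choose else 0 with hs
  have hGs : ∀ j ∈ Finset.Icc 1 (k-1), G (s j) = (j : ℝ) / k := by
    intro j hj
    simp only [hs, dif_pos hj]
    exact (hex j hj).choose_spec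
  have h1mem : 1 ∈ Finset.Icc 1 (k-1) := by simp; omega
  have hkmem : k - 1 ∈ Finset.Icc 1 (k-1) := by simp; omega
  -- eventual closeness on grid
  have hev : ∀ᶠ n in atTop, ∀ j ∈ Finset.Icc 1 (k-1), |F n (s j) - G (s j)| ≤ η := by
    rw [eventually_all_finset]
    intro j _
    have := (hpt (s j)).eventually (Metric.ball_mem_nhds (G (s j)) hη)
    filter_upwards [this] with n hn
    rw [Real.dist_eq] at hn
    exact le_of_lt hn
  filter_upwards [hev] with n hn t
  rw [abs_sub_le_iff]
  have habs : ∀ j ∈ Finset.Icc 1 (k-1), F n (s j) - (j:ℝ)/k ≤ η ∧ (j:ℝ)/k - F n (s j) ≤ η := by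
    intro j hj
    have := hn j hj
    rw [hGs j hj] at this
    rw [abs_sub_le_iff] at this
    exact this
  by_cases hlo : t < s 1
  · have h1 : G (s 1) = 1 / k := by simpa using hGs 1 h1mem
    have hFt : F n t ≤ F n (s 1) := hFmono n (le_of_lt hlo)
    have hGt : G t ≤ G (s 1) := hGmono (le_of_lt hlo)
    have h2 := (habs 1 h1mem).1
    have h3 := (habs 1 h1mem).2
    push_cast at h2 h3
    constructor
    · linarith [hG0 t]
    · linarith [hF0 n t, h1 ▸ hGt]
  push_neg at hlo
  by_cases hhi : s (k-1) ≤ t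
  · have hGk : G (s (k-1)) = ((k-1:ℕ):ℝ) / k := hGs _ hkmem
    have hcast : ((k-1:ℕ):ℝ) = (k:ℝ) - 1 := by
      have h1k : (1:ℕ) ≤ k := by omega
      push_cast [h1k]
      ring_nf
    have hGt : ((k:ℝ)-1)/k ≤ G t := by
      rw [← hcast, ← hGk]; exact hGmono hhi
    have hFt : F n (s (k-1)) ≤ F n t := hFmono n hhi
    have h2 := (habs _ hkmem).2
    rw [hcast] at h2
    constructor
    · have : ((k:ℝ)-1)/k = 1 - 1/k := by field_simp
      nlinarith [hF1 n t]
    · have : ((k:ℝ)-1)/k = 1 - 1/k := by field_simp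
      nlinarith [hG1 t]
  push_neg at hhi
  -- find the max grid point ≤ t
  set J := (Finset.Icc 1 (k-1)).filter (fun j => s j ≤ t) with hJ
  have hJne : J.Nonempty := ⟨1, Finset.mem_filter.mpr ⟨h1mem, hlo⟩⟩
  set j := J.max' hJne with hj
  have hjmem' : j ∈ J := J.max'_mem hJne
  have hjmem : j ∈ Finset.Icc 1 (k-1) := (Finset.mem_filter.mp hjmem').1
  have hjle : s j ≤ t := (Finset.mem_filter.mp hjmem').2
  have hjlt : j < k - 1 := by
    rcases lt_or_eq_of_le (Finset.mem_Icc.mp hjmem).2 with h | h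
    · exact h
    · exfalso; rw [h] at hjle; exact absurd hjle (not_le.mpr hhi)
  have hj1mem : j + 1 ∈ Finset.Icc 1 (k-1) := by simp; omega
  have hj1gt : t < s (j+1) := by
    by_contra h
    push_neg at h
    have : j + 1 ∈ J := Finset.mem_filter.mpr ⟨hj1mem, h⟩
    have := J.le_max' _ this
    omega
  have hGj : G (s j) = (j:ℝ)/k := hGs _ hjmem
  have hGj1 : G (s (j+1)) = ((j:ℝ)+1)/k := by
    have := hGs _ hj1mem; push_cast at this; exact this
  have hFle : F n t ≤ F n (s (j+1)) := hFmono n (le_of_lt hj1gt)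
  have hFge : F n (s j) ≤ F n t := hFmono n hjle
  have hGle : G t ≤ G (s (j+1)) := hGmono (le_of_lt hj1gt)
  have hGge : G (s j) ≤ G t := hGmono hjle
  have h1 := (habs _ hjmem).2
  have h2 := (habs _ hj1mem).1
  push_cast at h2
  have hgap : ((j:ℝ)+1)/k - (j:ℝ)/k = 1/k := by field_simp; ring
  constructor
  · nlinarith
  · nlinarith


/-- If `Zₙ → Z` weakly and the distribution function of `Z` is continuous, then for every
`ε > 0` the concentration functions converge: `Q(Zₙ, ε) → Q(Z, ε)`. -/
theorem concentration_tendsto_of_weak_convergence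
    {Ω : Type*} [MeasurableSpace Ω] (μ : Measure Ω) [IsProbabilityMeasure μ]
    (Z : ℕ → Ω → ℝ) (Zlim : Ω → ℝ)
    (hZm : ∀ n, Measurable (Z n)) (hZl : Measurable Zlim)
    (hweak : ∀ f : BoundedContinuousFunction ℝ ℝ,
      Tendsto (fun n => ∫ x, f x ∂(μ.map (Z n))) atTop (nhds (∫ x, f x ∂(μ.map Zlim))))
    (hcont : Continuous fun t => ((μ.map Zlim) (Set.Iic t)).toReal)
    (ε : ℝ) (hε : 0 < ε) :
    Tendsto (fun n => ⨆ t : ℝ, (μ {ω | t ≤ Z n ω ∧ Z n ω ≤ t + ε}).toReal) atTop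
      (nhds (⨆ t : ℝ, (μ {ω | t ≤ Zlim ω ∧ Zlim ω ≤ t + ε}).toReal)) := by
  have hprob : ∀ n, IsProbabilityMeasure (μ.map (Z n)) :=
    fun n => Measure.isProbabilityMeasure_map (hZm n).aemeasurable
  haveI hprobl : IsProbabilityMeasure (μ.map Zlim) :=
    Measure.isProbabilityMeasure_map hZl.aemeasurable
  set F : ℕ → ℝ → ℝ := fun n t => ((μ.map (Z n)) (Iic t)).toReal with hF
  set G : ℝ → ℝ := fun t => ((μ.map Zlim) (Iic t)).toReal with hG
  -- basic facts
  have hle1 : ∀ (ρ : Measure ℝ), IsProbabilityMeasure ρ → ∀ s : Set ℝ, (ρ s).toReal ≤ 1 := by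
    intro ρ hρ s
    haveI := hρ
    have h : (ρ s).toReal ≤ (1 : ENNReal).toReal :=
      ENNReal.toReal_mono ENNReal.one_ne_top prob_le_one
    simpa using h
  have hFmono : ∀ n, Monotone (F n) := fun n a b hab =>
    ENNReal.toReal_mono (measure_ne_top _ _) (measure_mono (Iic_subset_Iic.mpr hab))
  have hGmono : Monotone G := fun a b hab =>
    ENNReal.toReal_mono (measure_ne_top _ _) (measure_mono (Iic_subset_Iic.mpr hab))
  have hF0 : ∀ n t, 0 ≤ F n t := fun n t => ENNReal.toReal_nonneg
  have hF1 : ∀ n t, F n t ≤ 1 := fun n t => hle1 _ (hprob n) _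
  have hG0 : ∀ t, 0 ≤ G t := fun t => ENNReal.toReal_nonneg
  have hG1 : ∀ t, G t ≤ 1 := fun t => hle1 _ hprobl _
  -- Ioc difference formula
  have hIoc : ∀ (ρ : Measure ℝ), IsProbabilityMeasure ρ → ∀ a b : ℝ, a ≤ b →
      (ρ (Ioc a b)).toReal = (ρ (Iic b)).toReal - (ρ (Iic a)).toReal := by
    intro ρ hρ a b hab
    haveI := hρ
    have hsub : Iic a ⊆ Iic b := Iic_subset_Iic.mpr hab
    have h2 : ρ (Iic b \ Iic a) = ρ (Iic b) - ρ (Iic a) :=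
      measure_diff hsub measurableSet_Iic.nullMeasurableSet (measure_ne_top _ _)
    rw [Set.Iic_sdiff_Iic] at h2
    rw [h2, ENNReal.toReal_sub_of_le (measure_mono hsub) (measure_ne_top _ _)]
  -- limits of G at ±∞
  have hGtop : Tendsto G atTop (nhds 1) := by
    have h1 := tendsto_measure_Iic_atTop (μ.map Zlim)
    have h2 : Tendsto (fun t => ((μ.map Zlim) (Iic t)).toReal) atTop
        (nhds ((μ.map Zlim) univ).toReal) :=
      (ENNReal.tendsto_toReal (measure_ne_top _ _)).comp h1
    simpa [measure_univ] using h2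
  have hGbot : Tendsto G atBot (nhds 0) := by
    have hinter : ⋂ x : ℝ, Iic x = (∅ : Set ℝ) := by
      ext y
      simp only [Set.mem_iInter, Set.mem_Iic, Set.mem_empty_iff_false, iff_false, not_forall,
        not_le]
      exact ⟨y - 1, by linarith⟩
    have h1 := tendsto_measure_iInter_atBot (μ := μ.map Zlim)
      (fun i => measurableSet_Iic.nullMeasurableSet) monotone_Iic ⟨0, measure_ne_top _ _⟩
    rw [hinter] at h1
    have h2 : Tendsto (fun t => ((μ.map Zlim) (Iic t)).toReal) atBot
        (nhds ((μ.map Zlim) (∅ : Set ℝ)).toReal) :=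
      (ENNReal.tendsto_toReal (measure_ne_top _ _)).comp h1
    simpa using h2
  -- no atoms for the limit law
  have hatom : ∀ t : ℝ, (μ.map Zlim) {t} = 0 := by
    intro t
    have key : ∀ δ : ℝ, 0 < δ → ((μ.map Zlim) {t}).toReal ≤ δ := by
      intro δ hδ
      have hcAt : ContinuousAt G t := hcont.continuousAt
      rw [Metric.continuousAt_iff] at hcAt
      obtain ⟨d, hd, hdd⟩ := hcAt δ hδ
      set s := t - d / 2 with hsdef
      have hst : s < t := by simp [hsdef]; linarith
      have hdist : dist s t < d := by
        rw [Real.dist_eq]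
        simp [hsdef]
        rw [abs_of_nonneg (by linarith)]
        linarith
      have hGst : G t - G s < δ := by
        have := hdd hdist
        rw [Real.dist_eq, abs_sub_lt_iff] at this
        linarith [this.2]
      have hsubset : ({t} : Set ℝ) ⊆ Ioc s t := by
        intro x hx
        simp only [Set.mem_singleton_iff] at hx
        subst hx
        exact ⟨hst, le_refl _⟩
      calc ((μ.map Zlim) {t}).toReal
          ≤ ((μ.map Zlim) (Ioc s t)).toReal :=
            ENNReal.toReal_mono (measure_ne_top _ _) (measure_mono hsubset)
        _ = G t - G s := hIoc _ hprobl s t (le_of_lt hst)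
        _ ≤ δ := le_of_lt hGst
    have h0 : ((μ.map Zlim) {t}).toReal = 0 := by
      by_contra hne
      have hpos : 0 < ((μ.map Zlim) {t}).toReal :=
        lt_of_le_of_ne ENNReal.toReal_nonneg (Ne.symm hne)
      have := key (((μ.map Zlim) {t}).toReal / 2) (by linarith)
      linarith
    rwa [ENNReal.toReal_eq_zero_iff, or_iff_left (measure_ne_top _ _)] at h0
  -- pointwise convergence of the cdfs
  have hpt : ∀ t, Tendsto (fun n => F n t) atTop (nhds (G t)) := by
    set P : ℕ → ProbabilityMeasure ℝ := fun n => ⟨μ.map (Z n), hprob n⟩ with hP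
    set Pl : ProbabilityMeasure ℝ := ⟨μ.map Zlim, hprobl⟩ with hPl
    have hPt : Tendsto P atTop (nhds Pl) :=
      ProbabilityMeasure.tendsto_iff_forall_integral_tendsto.mpr (fun f => hweak f)
    intro t
    have hfront : (Pl : Measure ℝ) (frontier (Iic t)) = 0 := by
      rw [frontier_Iic]
      exact hatom t
    have hkey := ProbabilityMeasure.tendsto_measure_of_null_frontier_of_tendsto' hPt hfront
    have := (ENNReal.tendsto_toReal (measure_ne_top (Pl : Measure ℝ) (Iic t))).comp hkey
    exact this
  -- identification of the sets
  have hmap : ∀ n t, μ {ω | t ≤ Z n ω ∧ Z n ω ≤ t + ε} = (μ.map (Z n)) (Icc t (t + ε)) := by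
    intro n t
    rw [Measure.map_apply (hZm n) measurableSet_Icc]
    rfl
  have hmapl : ∀ t : ℝ, μ {ω | t ≤ Zlim ω ∧ Zlim ω ≤ t + ε} = (μ.map Zlim) (Icc t (t + ε)) := by
    intro t
    rw [Measure.map_apply hZl measurableSet_Icc]
    rfl
  have hbdd : ∀ n, BddAbove (Set.range fun t : ℝ => (μ {ω | t ≤ Z n ω ∧ Z n ω ≤ t + ε}).toReal) := by
    intro n
    refine ⟨1, ?_⟩
    rintro x ⟨t, rfl⟩
    dsimp only
    rw [hmap n t]
    exact hle1 _ (hprob n) _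
  have hbddl : BddAbove (Set.range fun t : ℝ => (μ {ω | t ≤ Zlim ω ∧ Zlim ω ≤ t + ε}).toReal) := by
    refine ⟨1, ?_⟩
    rintro x ⟨t, rfl⟩
    dsimp only
    rw [hmapl t]
    exact hle1 _ hprobl _
  set Qn : ℕ → ℝ := fun n => ⨆ t : ℝ, (μ {ω | t ≤ Z n ω ∧ Z n ω ≤ t + ε}).toReal with hQn
  set QL : ℝ := ⨆ t : ℝ, (μ {ω | t ≤ Zlim ω ∧ Zlim ω ≤ t + ε}).toReal with hQL
  -- the main estimate
  have hmain : ∀ η : ℝ, 0 < η → ∀ᶠ n in atTop, |Qn n - QL| ≤ 4 * η := by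
    intro η hη
    filter_upwards [polya_unif hFmono hF0 hF1 hG0 hG1 hGmono hcont hGbot hGtop hpt hη] with n hn
    show |Qn n - QL| ≤ 4 * η
    rw [abs_sub_le_iff]
    constructor
    · -- Qn n ≤ QL + 4η
      have hA : Qn n ≤ QL + 4 * η := by
        rw [hQn]
        dsimp only
        apply ciSup_le
        intro t
        rw [hmap n t]
        -- upper bound per t
        have hstep : ∀ s : ℝ, s < t →
            ((μ.map (Z n)) (Icc t (t + ε))).toReal ≤ G (t + ε) - G s + 4 * η := by
          intro s hst
          have hsub : Icc t (t + ε) ⊆ Ioc s (t + ε) := fun x hx => ⟨lt_of_lt_of_le hst hx.1, hx.2⟩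
          have h1 : ((μ.map (Z n)) (Icc t (t + ε))).toReal ≤ F n (t + ε) - F n s := by
            calc ((μ.map (Z n)) (Icc t (t + ε))).toReal
                ≤ ((μ.map (Z n)) (Ioc s (t + ε))).toReal :=
                  ENNReal.toReal_mono (measure_ne_top _ _) (measure_mono hsub)
              _ = F n (t + ε) - F n s := hIoc _ (hprob n) s (t + ε) (by linarith)
          have h2 := abs_sub_le_iff.mp (hn (t + ε))
          have h3 := abs_sub_le_iff.mp (hn s)
          linarith [h2.1, h3.2]
        have hlim : ((μ.map (Z n)) (Icc t (t + ε))).toReal ≤ G (t + ε) - G t + 4 * η := by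
          have htend : Tendsto G (nhdsWithin t (Iio t)) (nhds (G t)) :=
            (hcont.tendsto t).mono_left nhdsWithin_le_nhds
          have hev : ∀ᶠ s in nhdsWithin t (Iio t),
              G s ≤ G (t + ε) + 4 * η - ((μ.map (Z n)) (Icc t (t + ε))).toReal := by
            apply eventually_nhdsWithin_of_forall
            intro s hs
            have := hstep s hs
            linarith
          have := le_of_tendsto htend hev
          linarith
        have hlast : G (t + ε) - G t ≤ QL := by
          have h1 : G (t + ε) - G t = ((μ.map Zlim) (Ioc t (t + ε))).toReal :=
            (hIoc _ hprobl t (t + ε) (by linarith)).symm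
          have h2 : ((μ.map Zlim) (Ioc t (t + ε))).toReal ≤ ((μ.map Zlim) (Icc t (t + ε))).toReal :=
            ENNReal.toReal_mono (measure_ne_top _ _) (measure_mono Ioc_subset_Icc_self)
          have h3 : (μ {ω | t ≤ Zlim ω ∧ Zlim ω ≤ t + ε}).toReal ≤ QL := le_ciSup hbddl t
          rw [hmapl t] at h3
          linarith
        linarith
      linarith
    · -- QL ≤ Qn n + 4η
      have hB : QL ≤ Qn n + 4 * η := by
        rw [hQL]
        apply ciSup_le
        intro t
        rw [hmapl t]
        have hIccIoc : (μ.map Zlim) (Icc t (t + ε)) = (μ.map Zlim) (Ioc t (t + ε)) := by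
          apply le_antisymm
          · have hsub : Icc t (t + ε) ⊆ {t} ∪ Ioc t (t + ε) := by
              intro x hx
              rcases eq_or_lt_of_le hx.1 with h | h
              · exact Or.inl (by simp [h.symm])
              · exact Or.inr ⟨h, hx.2⟩
            calc (μ.map Zlim) (Icc t (t + ε)) ≤ (μ.map Zlim) ({t} ∪ Ioc t (t + ε)) :=
                  measure_mono hsub
              _ ≤ (μ.map Zlim) {t} + (μ.map Zlim) (Ioc t (t + ε)) := measure_union_le _ _
              _ = (μ.map Zlim) (Ioc t (t + ε)) := by rw [hatom t, zero_add]
          · exact measure_mono Ioc_subset_Icc_self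
        rw [hIccIoc]
        have h1 : ((μ.map Zlim) (Ioc t (t + ε))).toReal = G (t + ε) - G t :=
          hIoc _ hprobl t (t + ε) (by linarith)
        have h2 := abs_sub_le_iff.mp (hn (t + ε))
        have h3 := abs_sub_le_iff.mp (hn t)
        have h4 : F n (t + ε) - F n t = ((μ.map (Z n)) (Ioc t (t + ε))).toReal :=
          (hIoc _ (hprob n) t (t + ε) (by linarith)).symm
        have h5 : ((μ.map (Z n)) (Ioc t (t + ε))).toReal ≤ ((μ.map (Z n)) (Icc t (t + ε))).toReal :=
          ENNReal.toReal_mono (measure_ne_top _ _) (measure_mono Ioc_subset_Icc_self)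
        have h6 : (μ {ω | t ≤ Z n ω ∧ Z n ω ≤ t + ε}).toReal ≤ Qn n := le_ciSup (hbdd n) t
        rw [hmap n t] at h6
        linarith [h2.2, h3.1]
      linarith
  -- conclude
  rw [Metric.tendsto_atTop]
  intro e he
  obtain ⟨N, hN⟩ := (hmain (e / 9) (by linarith)).exists_forall_of_atTop
  refine ⟨N, fun n hn => ?_⟩
  have := hN n hn
  rw [Real.dist_eq]
  calc |Qn n - QL| ≤ 4 * (e / 9) := this
  _ < e := by linarith
end

section
/- Let s ∈ (−1/2, 0) and t, u ∈ (0, 1). Then (∫ over [min(t,u), max(t,u)] of max(v, 1−v)^{s−1} dv)² ≤ (2/s²)[(t^{−s} − u^{−s})² + ((1−u)^{−s} − (1−t)^{−s})²], and the right-hand side, integrated over (t,u) ∈ (0,1)², is at most 8/((2s+1)(s+1)²). -/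
open MeasureTheory intervalIntegral

-- pointwise core inequality
lemma core_ineq (s : ℝ) (hs1 : -1 / 2 < s) (hs2 : s < 0) (a b : ℝ) (ha : 0 < a)
    (hab : a ≤ b) (hsum : a + b = 1) :
    b ^ (s - 1) ≤ a ^ (-s - 1) + b ^ (-s - 1) := by
  have hb : 0 < b := by linarith
  have hb1 : b ≤ 1 := by linarith
  have h1 : b ^ (s - 1) ≤ b ^ (-s - 2) :=
    Real.rpow_le_rpow_of_exponent_ge hb hb1 (by linarith)
  have h2 : b ^ (-s - 2) = a * b ^ (-s - 2) + b ^ (-s - 1) := by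
    have : b ^ (-s - 1) = b ^ (-s - 2) * b := by
      rw [show (-s - 1 : ℝ) = (-s - 2) + 1 by ring, Real.rpow_add hb, Real.rpow_one]
    rw [this]; linear_combination (b ^ (-s - 2)) * hsum.symm
  have h3 : b ^ (-s - 2) ≤ a ^ (-s - 2) :=
    Real.rpow_le_rpow_of_nonpos ha hab (by linarith)
  have h4 : a * a ^ (-s - 2) = a ^ (-s - 1) := by
    rw [show (-s - 1 : ℝ) = (-s - 2) + 1 by ring, Real.rpow_add ha, Real.rpow_one]; ring
  calc b ^ (s - 1) ≤ a * b ^ (-s - 2) + b ^ (-s - 1) := by rw [← h2]; exact h1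
    _ ≤ a * a ^ (-s - 2) + b ^ (-s - 1) := by nlinarith
    _ = a ^ (-s - 1) + b ^ (-s - 1) := by rw [h4]

lemma ptwise (s : ℝ) (hs1 : -1 / 2 < s) (hs2 : s < 0) (v : ℝ) (hv0 : 0 < v) (hv1 : v < 1) :
    (max v (1 - v)) ^ (s - 1) ≤ v ^ (-s - 1) + (1 - v) ^ (-s - 1) := by
  rcases le_total v (1 - v) with h | h
  · rw [max_eq_right h]
    exact core_ineq s hs1 hs2 v (1 - v) hv0 h (by ring)
  · rw [max_eq_left h]
    have := core_ineq s hs1 hs2 (1 - v) v (by linarith) h (by ring)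
    linarith

-- master integral computation on [0,1]
lemma master (p : ℝ) (hp : 0 < p) (A B1 B2 C : ℝ) :
    ∫ u in (0:ℝ)..1, (A + B1 * u ^ p + B2 * (1 - u) ^ p
        + C * ((u ^ p) ^ 2 + ((1 - u) ^ p) ^ 2)) =
      A + (B1 + B2) / (p + 1) + 2 * C / (2 * p + 1) := by
  have hp1 : p + 1 ≠ 0 := by linarith
  have hp2 : 2 * p + 1 ≠ 0 := by linarith
  set F : ℝ → ℝ := fun u => A * u + B1 / (p + 1) * u ^ (p + 1)
      - B2 / (p + 1) * (1 - u) ^ (p + 1)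
      + C / (2 * p + 1) * u ^ (2 * p + 1) - C / (2 * p + 1) * (1 - u) ^ (2 * p + 1) with hF
  have c1 : Continuous fun u : ℝ => u ^ p := Real.continuous_rpow_const hp.le
  have c2 : Continuous fun u : ℝ => (1 - u) ^ p :=
    c1.comp (continuous_const.sub continuous_id)
  have hgc : Continuous fun u : ℝ => (A + B1 * u ^ p + B2 * (1 - u) ^ p
      + C * ((u ^ p) ^ 2 + ((1 - u) ^ p) ^ 2)) := by
    apply Continuous.add
    · exact (continuous_const.add (continuous_const.mul c1)).add (continuous_const.mul c2)
    · exact continuous_const.mul ((c1.pow 2).add (c2.pow 2))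
  have hderiv : ∀ u ∈ Set.uIcc (0:ℝ) 1, HasDerivAt F
      (A + B1 * u ^ p + B2 * (1 - u) ^ p + C * ((u ^ p) ^ 2 + ((1 - u) ^ p) ^ 2)) u := by
    intro u hu
    rw [Set.uIcc_of_le (by norm_num : (0:ℝ) ≤ 1)] at hu
    have hu0 : (0:ℝ) ≤ u := hu.1
    have hu0' : (0:ℝ) ≤ 1 - u := by linarith [hu.2]
    have e1 : (u ^ p) ^ 2 = u ^ (2 * p) := by
      rw [show 2 * p = p + p by ring, Real.rpow_add' hu0 (by linarith), sq]
    have e2 : ((1 - u) ^ p) ^ 2 = (1 - u) ^ (2 * p) := by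
      rw [show 2 * p = p + p by ring, Real.rpow_add' hu0' (by linarith), sq]
    have hsub : HasDerivAt (fun x : ℝ => 1 - x) (-1) u := by
      simpa using (hasDerivAt_id u).const_sub 1
    have d1 : HasDerivAt (fun x : ℝ => x ^ (p + 1)) ((p + 1) * u ^ p) u := by
      have := Real.hasDerivAt_rpow_const (x := u) (p := p + 1) (Or.inr (by linarith))
      simpa using this
    have d2 : HasDerivAt (fun x : ℝ => (1 - x) ^ (p + 1)) ((p + 1) * (1 - u) ^ p * (-1)) u := by
      have h0 := Real.hasDerivAt_rpow_const (x := 1 - u) (p := p + 1) (Or.inr (by linarith))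
      have := h0.comp u hsub
      simpa [Function.comp_def] using this
    have d3 : HasDerivAt (fun x : ℝ => x ^ (2 * p + 1)) ((2 * p + 1) * u ^ (2 * p)) u := by
      have := Real.hasDerivAt_rpow_const (x := u) (p := 2 * p + 1) (Or.inr (by linarith))
      simpa using this
    have d4 : HasDerivAt (fun x : ℝ => (1 - x) ^ (2 * p + 1))
        ((2 * p + 1) * (1 - u) ^ (2 * p) * (-1)) u := by
      have h0 := Real.hasDerivAt_rpow_const (x := 1 - u) (p := 2 * p + 1) (Or.inr (by linarith))
      have := h0.comp u hsub
      simpa [Function.comp_def] using this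
    have D := ((((hasDerivAt_id u).const_mul A).add (d1.const_mul (B1 / (p + 1)))).sub
        (d2.const_mul (B2 / (p + 1)))).add (d3.const_mul (C / (2 * p + 1))) |>.sub
        (d4.const_mul (C / (2 * p + 1)))
    convert D using 1
    · rfl
    · rfl
    · rfl
    rw [e1, e2]
    field_simp
    ring
  rw [intervalIntegral.integral_eq_sub_of_hasDerivAt hderiv
    (hgc.intervalIntegrable 0 1)]
  have z1 : (0:ℝ) ^ (p + 1) = 0 := Real.zero_rpow (by linarith)
  have z2 : (0:ℝ) ^ (2 * p + 1) = 0 := Real.zero_rpow (by linarith)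
  simp only [hF, sub_self, sub_zero, z1, z2, Real.one_rpow]
  field_simp
  ring

lemma key1 (p : ℝ) (hp : 0 < p) (c d : ℝ) :
    ∫ u in (0:ℝ)..1, ((c - u ^ p) ^ 2 + ((1 - u) ^ p - d) ^ 2) =
      c ^ 2 + d ^ 2 - 2 * (c + d) / (p + 1) + 2 / (2 * p + 1) := by
  have hp1 : p + 1 ≠ 0 := by linarith
  have hp2 : 2 * p + 1 ≠ 0 := by linarith
  have h := master p hp (c ^ 2 + d ^ 2) (-2 * c) (-2 * d) 1
  have heq : (fun u : ℝ => (c - u ^ p) ^ 2 + ((1 - u) ^ p - d) ^ 2) =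
      fun u : ℝ => (c ^ 2 + d ^ 2) + (-2 * c) * u ^ p + (-2 * d) * (1 - u) ^ p
        + 1 * ((u ^ p) ^ 2 + ((1 - u) ^ p) ^ 2) := by
    funext u; ring
  rw [heq, h]
  ring

lemma part1_aux (s : ℝ) (hs1 : -1 / 2 < s) (hs2 : s < 0) (t u : ℝ)
    (ht0 : 0 < t) (htu : t ≤ u) (hu1 : u < 1) :
    (∫ v in t..u, (max v (1 - v)) ^ (s - 1)) ^ 2 ≤
      2 / s ^ 2 * ((t ^ (-s) - u ^ (-s)) ^ 2 + ((1 - u) ^ (-s) - (1 - t) ^ (-s)) ^ 2) := by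
  have hs0 : s ≠ 0 := ne_of_lt hs2
  have hu0 : 0 < u := lt_of_lt_of_le ht0 htu
  have ht1 : t < 1 := lt_of_le_of_lt htu hu1
  -- continuity of the left integrand
  have hcf : Continuous fun v : ℝ => (max v (1 - v)) ^ (s - 1) := by
    rw [continuous_iff_continuousAt]
    intro v
    have hpos : (0:ℝ) < max v (1 - v) := by
      rcases le_total v (1 - v) with h | h
      · rw [max_eq_right h]; linarith
      · rw [max_eq_left h]; linarith
    have hrp : ContinuousAt (fun x : ℝ => x ^ (s - 1)) (max v (1 - v)) :=
      Real.continuousAt_rpow_const _ _ (Or.inl hpos.ne')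
    have hm : ContinuousAt (fun x : ℝ => max x (1 - x)) v :=
      (continuous_id.max (continuous_const.sub continuous_id)).continuousAt
    exact ContinuousAt.comp (g := fun x : ℝ => x ^ (s - 1)) (f := fun x : ℝ => max x (1 - x)) hrp hm
  -- integrability of the two comparison functions on [t,u]
  have hg1 : IntervalIntegrable (fun v : ℝ => v ^ (-s - 1)) volume t u := by
    apply ContinuousOn.intervalIntegrable
    intro v hv
    rw [Set.uIcc_of_le htu] at hv
    have : (0:ℝ) < v := lt_of_lt_of_le ht0 hv.1
    exact (Real.continuousAt_rpow_const _ _ (Or.inl this.ne')).continuousWithinAt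
  have hg2 : IntervalIntegrable (fun v : ℝ => (1 - v) ^ (-s - 1)) volume t u := by
    apply ContinuousOn.intervalIntegrable
    intro v hv
    rw [Set.uIcc_of_le htu] at hv
    have : (0:ℝ) < 1 - v := by linarith [lt_of_le_of_lt hv.2 hu1]
    exact ((Real.continuousAt_rpow_const _ _ (Or.inl this.ne')).comp
      ((continuous_const.sub continuous_id).continuousAt)).continuousWithinAt
  have hI0 : 0 ≤ ∫ v in t..u, (max v (1 - v)) ^ (s - 1) := by
    apply intervalIntegral.integral_nonneg htu
    intro x hx
    exact Real.rpow_nonneg (le_trans (le_of_lt (lt_of_lt_of_le ht0 hx.1)) (le_max_left _ _)) _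
  have hIJ : (∫ v in t..u, (max v (1 - v)) ^ (s - 1)) ≤
      ∫ v in t..u, (v ^ (-s - 1) + (1 - v) ^ (-s - 1)) := by
    apply intervalIntegral.integral_mono_on htu (hcf.intervalIntegrable t u) (hg1.add hg2)
    intro x hx
    exact ptwise s hs1 hs2 x (lt_of_lt_of_le ht0 hx.1) (lt_of_le_of_lt hx.2 hu1)
  have hsplit : (∫ v in t..u, (v ^ (-s - 1) + (1 - v) ^ (-s - 1))) =
      (u ^ (-s) - t ^ (-s)) / (-s) + ((1 - t) ^ (-s) - (1 - u) ^ (-s)) / (-s) := by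
    rw [intervalIntegral.integral_add hg1 hg2]
    have e1 : (∫ v in t..u, v ^ (-s - 1)) = (u ^ (-s) - t ^ (-s)) / (-s) := by
      rw [integral_rpow (Or.inr ⟨by intro h; apply hs0; linarith [sub_eq_iff_eq_add.mp h],
        by rw [Set.uIcc_of_le htu]; rintro ⟨h0, -⟩; linarith⟩)]
      norm_num
    have e2 : (∫ v in t..u, (1 - v) ^ (-s - 1)) =
        ((1 - t) ^ (-s) - (1 - u) ^ (-s)) / (-s) := by
      rw [show (fun v : ℝ => (1 - v) ^ (-s - 1)) = fun v : ℝ =>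
        (fun w : ℝ => w ^ (-s - 1)) (1 - v) from rfl]
      rw [intervalIntegral.integral_comp_sub_left (fun w : ℝ => w ^ (-s - 1)) 1]
      rw [integral_rpow (Or.inr ⟨by intro h; apply hs0; linarith [sub_eq_iff_eq_add.mp h],
        by rw [Set.uIcc_of_le (by linarith : (1:ℝ) - u ≤ 1 - t)]; rintro ⟨h0, -⟩; linarith⟩)]
      norm_num
    rw [e1, e2]
  rw [hsplit] at hIJ
  set X := t ^ (-s) with hX
  set Y := u ^ (-s) with hY
  set Z := (1 - u) ^ (-s) with hZ
  set W := (1 - t) ^ (-s) with hW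
  have hs2pos : (0:ℝ) < s ^ 2 := by positivity
  have hJ2 : ((Y - X) / (-s) + (W - Z) / (-s)) ^ 2 ≤
      2 / s ^ 2 * ((X - Y) ^ 2 + (Z - W) ^ 2) := by
    have hnum : (Y - X + (W - Z)) ^ 2 ≤ 2 * ((X - Y) ^ 2 + (Z - W) ^ 2) := by
      nlinarith [sq_nonneg (Y - X - (W - Z))]
    have hre : ((Y - X) / (-s) + (W - Z) / (-s)) ^ 2 =
        (Y - X + (W - Z)) ^ 2 / s ^ 2 := by
      field_simp
      try ring
    rw [hre, div_le_iff₀ hs2pos]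
    calc (Y - X + (W - Z)) ^ 2 ≤ 2 * ((X - Y) ^ 2 + (Z - W) ^ 2) := hnum
      _ = 2 / s ^ 2 * ((X - Y) ^ 2 + (Z - W) ^ 2) * s ^ 2 := by field_simp; try ring
  calc (∫ v in t..u, (max v (1 - v)) ^ (s - 1)) ^ 2
      ≤ ((Y - X) / (-s) + (W - Z) / (-s)) ^ 2 := by
        apply pow_le_pow_left₀ hI0 hIJ
    _ ≤ 2 / s ^ 2 * ((X - Y) ^ 2 + (Z - W) ^ 2) := hJ2

/-- The integral estimate underlying the variance upper bound for `s`-concave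
distributions, for `s ∈ (−1/2, 0)`. -/
theorem sConcave_integral_estimate (s : ℝ) (hs1 : -1 / 2 < s) (hs2 : s < 0) :
    (∀ t u : ℝ, t ∈ Set.Ioo (0 : ℝ) 1 → u ∈ Set.Ioo (0 : ℝ) 1 →
      (∫ v in min t u..max t u, (max v (1 - v)) ^ (s - 1)) ^ 2 ≤
        2 / s ^ 2 * ((t ^ (-s) - u ^ (-s)) ^ 2 + ((1 - u) ^ (-s) - (1 - t) ^ (-s)) ^ 2)) ∧
    (∫ t in (0:ℝ)..1, ∫ u in (0:ℝ)..1,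
        2 / s ^ 2 * ((t ^ (-s) - u ^ (-s)) ^ 2 + ((1 - u) ^ (-s) - (1 - t) ^ (-s)) ^ 2)) ≤
      8 / ((2 * s + 1) * (s + 1) ^ 2) := by
  have hs0 : s ≠ 0 := ne_of_lt hs2
  have hp : 0 < -s := by linarith
  constructor
  · intro t u ht hu
    rcases le_total t u with h | h
    · rw [min_eq_left h, max_eq_right h]
      exact part1_aux s hs1 hs2 t u ht.1 h hu.2
    · rw [min_eq_right h, max_eq_left h]
      have := part1_aux s hs1 hs2 u t hu.1 h ht.2
      calc (∫ v in u..t, (max v (1 - v)) ^ (s - 1)) ^ 2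
          ≤ 2 / s ^ 2 * ((u ^ (-s) - t ^ (-s)) ^ 2 + ((1 - t) ^ (-s) - (1 - u) ^ (-s)) ^ 2) :=
            this
        _ = 2 / s ^ 2 * ((t ^ (-s) - u ^ (-s)) ^ 2 + ((1 - u) ^ (-s) - (1 - t) ^ (-s)) ^ 2) := by
            ring
  · have inner : ∀ t : ℝ, (∫ u in (0:ℝ)..1,
        2 / s ^ 2 * ((t ^ (-s) - u ^ (-s)) ^ 2 + ((1 - u) ^ (-s) - (1 - t) ^ (-s)) ^ 2)) =
        2 / s ^ 2 * ((t ^ (-s)) ^ 2 + ((1 - t) ^ (-s)) ^ 2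
          - 2 * (t ^ (-s) + (1 - t) ^ (-s)) / (-s + 1) + 2 / (2 * (-s) + 1)) := by
      intro t
      rw [intervalIntegral.integral_const_mul, key1 (-s) hp (t ^ (-s)) ((1 - t) ^ (-s))]
    simp only [inner]
    rw [intervalIntegral.integral_const_mul]
    have houter : (∫ t in (0:ℝ)..1, ((t ^ (-s)) ^ 2 + ((1 - t) ^ (-s)) ^ 2
        - 2 * (t ^ (-s) + (1 - t) ^ (-s)) / (-s + 1) + 2 / (2 * (-s) + 1))) =
        4 / (2 * (-s) + 1) - 4 / (-s + 1) ^ 2 := by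
      have h := master (-s) hp (2 / (2 * (-s) + 1)) (-2 / (-s + 1)) (-2 / (-s + 1)) 1
      have heq : (fun t : ℝ => (t ^ (-s)) ^ 2 + ((1 - t) ^ (-s)) ^ 2
          - 2 * (t ^ (-s) + (1 - t) ^ (-s)) / (-s + 1) + 2 / (2 * (-s) + 1)) =
          fun t : ℝ => 2 / (2 * (-s) + 1) + (-2 / (-s + 1)) * t ^ (-s)
            + (-2 / (-s + 1)) * (1 - t) ^ (-s)
            + 1 * ((t ^ (-s)) ^ 2 + ((1 - t) ^ (-s)) ^ 2) := by
        funext t; ring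
      rw [heq, h]
      have h1 : -s + 1 ≠ 0 := by linarith
      have h2 : 2 * (-s) + 1 ≠ 0 := by linarith
      field_simp
      ring
    rw [houter]
    have hval : 2 / s ^ 2 * (4 / (2 * (-s) + 1) - 4 / (-s + 1) ^ 2) =
        8 / ((1 - 2 * s) * (1 - s) ^ 2) := by
      have h3 : (1:ℝ) - 2 * s ≠ 0 := ne_of_gt (by linarith)
      have h4 : (1:ℝ) - s ≠ 0 := ne_of_gt (by linarith)
      rw [show 2 * (-s) + 1 = 1 - 2 * s by ring, show -s + 1 = 1 - s by ring]
      field_simp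
      ring
    rw [hval]
    have hd1 : (0:ℝ) < (1 - 2 * s) * (1 - s) ^ 2 := by nlinarith
    have hd2 : (0:ℝ) < (2 * s + 1) * (s + 1) ^ 2 := by nlinarith
    rw [div_le_div_iff₀ hd1 hd2]
    nlinarith [sq_nonneg s]
end
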